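/- Let D be a Prüfer domain and let P be a nonzero prime ideal of D with P ≠ P², and set Q := ⋂_{n ≥ 1} Pⁿ. Then the quotient D_P/QD_P of the localization D_P by the extension of Q is a discrete valuation ring (a Noetherian valuation domain, equivalently a one-dimensional valuation domain whose maximal ideal is not idempotent). -/

import Mathlib

/-- In a valuation domain, powers of a prime ideal are primary. -/
lemma val_pow_primary {V : Type*} [CommRing V] [IsDomain V] [ValuationRing V]
    (p : Ideal V) (hp : p.IsPrime) {s a : V} (hs : s ∉ p)
    (n : ℕ) (h : s * a ∈ p ^ n) : a ∈ p ^ n := by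
  rcases Nat.eq_zero_or_pos n with rfl | hn
  · simp
  have hs0 : s ≠ 0 := fun h0 => hs (h0 ▸ p.zero_mem)
  have hsp : p ≤ Ideal.span {s} * p := by
    intro x hx
    rcases ValuationRing.dvd_total s x with ⟨c, rfl⟩ | ⟨c, hc⟩
    · rcases hp.mem_or_mem hx with h1 | h1
      · exact absurd h1 hs
      · exact Ideal.mul_mem_mul (Ideal.mem_span_singleton_self s) h1
    · exact absurd (hc ▸ p.mul_mem_right c hx) hs
  have hpow : p ^ n ≤ Ideal.span {s} * p ^ n := by
    obtain ⟨m, rfl⟩ := Nat.exists_eq_add_of_le hn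
    calc p ^ (1 + m) = p * p ^ m := by rw [pow_add, pow_one]
    _ ≤ (Ideal.span {s} * p) * p ^ m := Ideal.mul_mono_left hsp
    _ = Ideal.span {s} * p ^ (1 + m) := by rw [mul_assoc, pow_add, pow_one]
  obtain ⟨y, hy, hyx⟩ := Ideal.mem_span_singleton_mul.mp (hpow h)
  rwa [← mul_left_cancel₀ hs0 hyx]

/-- In a Prüfer domain, powers of prime ideals are primary. -/
lemma prufer_pow_primary {D : Type*} [CommRing D] [IsDomain D]
    (hPruf : ∀ (P : Ideal D) (hP : P.IsPrime),
      ValuationRing (@Localization.AtPrime D _ P hP))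
    (P : Ideal D) (hP : P.IsPrime) {s a : D} (hs : s ∉ P) (n : ℕ)
    (h : s * a ∈ P ^ n) : a ∈ P ^ n := by
  apply Ideal.mem_of_localization_maximal
  intro m hm
  haveI := hm.isPrime
  haveI := hPruf m hm.isPrime
  set f := algebraMap D (Localization.AtPrime m) with hf
  by_cases hPm : P ≤ m
  · have hdisj : Disjoint (m.primeCompl : Set D) (P : Set D) := by
      rw [Set.disjoint_left]
      exact fun x hx hxP => hx (hPm hxP)
    have hprime := IsLocalization.isPrime_of_isPrime_disjoint m.primeCompl
      (Localization.AtPrime m) P hP hdisj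
    have hcom := IsLocalization.comap_map_of_isPrime_disjoint m.primeCompl
      (Localization.AtPrime m) hP hdisj
    have hsP : f s ∉ P.map f := fun hmem => hs (by
      rw [← hcom]; exact Ideal.mem_comap.mpr hmem)
    have hmem : f s * f a ∈ (P.map f) ^ n := by
      rw [← map_mul, ← Ideal.map_pow]
      exact Ideal.mem_map_of_mem f h
    have := val_pow_primary (P.map f) hprime hsP n hmem
    rwa [← Ideal.map_pow] at this
  · obtain ⟨u, huP, hum⟩ := SetLike.not_le_iff_exists.mp hPm
    have htop : Ideal.map f (P ^ n) = ⊤ := by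
      apply Ideal.eq_top_of_isUnit_mem _ (Ideal.mem_map_of_mem f (Ideal.pow_mem_pow huP n))
      exact IsLocalization.map_units _ (⟨u ^ n, pow_mem hum n⟩ : m.primeCompl)
    rw [htop]
    trivial

/-- Let `D` be a Prüfer domain (an integral domain all of whose localizations at
primes are valuation domains), `P` a nonzero non-idempotent prime ideal, and
`Q = ⋂_{n ≥ 1} Pⁿ`. Then the quotient `D_P/QD_P` of the localization `D_P` by the
extension of `Q` is a discrete valuation ring. -/
theorem localization_quotient_is_DVR (D : Type*) [CommRing D] [IsDomain D]
    (hPruf : ∀ (P : Ideal D) (hP : P.IsPrime),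
      ValuationRing (@Localization.AtPrime D _ P hP))
    (P : Ideal D) [hP : P.IsPrime] (hP0 : P ≠ ⊥) (hPsq : P ≠ P ^ 2)
    (Q : Ideal D) (hQ : Q = ⨅ n ≥ 1, P ^ n) :
    ∃ hdom : IsDomain
        (Localization.AtPrime P ⧸ Q.map (algebraMap D (Localization.AtPrime P))),
      @IsDiscreteValuationRing
        (Localization.AtPrime P ⧸ Q.map (algebraMap D (Localization.AtPrime P)))
        _ hdom := by
  haveI := hPruf P hP
  set R := Localization.AtPrime P with hR
  set f := algebraMap D R with hf
  set M := IsLocalRing.maximalIdeal R with hM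
  have hmapP : P.map f = M := Localization.AtPrime.map_eq_maximalIdeal
  -- pull back membership in powers of M
  have hpull : ∀ (a : D) (n : ℕ), f a ∈ M ^ n → a ∈ P ^ n := by
    intro a n ha
    rw [← hmapP, ← Ideal.map_pow] at ha
    obtain ⟨⟨⟨b, hb⟩, ⟨s, hsc⟩⟩, hbs⟩ := (IsLocalization.mem_map_algebraMap_iff P.primeCompl R).mp ha
    simp only [hf, ← map_mul] at hbs
    obtain ⟨c, hc⟩ := (IsLocalization.eq_iff_exists P.primeCompl R).mp hbs
    have : (↑c * s) * a ∈ P ^ n := by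
      have heq : (↑c * s) * a = ↑c * b :=
        (by ring : (↑c * s) * a = ↑c * (a * s)).trans hc
      rw [heq]
      exact Ideal.mul_mem_left _ _ hb
    exact prufer_pow_primary hPruf P hP (mul_mem c.2 hsc) n this
  -- M is not idempotent
  have hMsq : ¬ (M ≤ M ^ 2) := by
    intro hle
    apply hPsq
    refine le_antisymm (fun a ha => ?_) (Ideal.pow_le_self two_ne_zero)
    exact hpull a 2 (hle (hmapP ▸ Ideal.mem_map_of_mem f ha))
  -- get a generator t of M
  obtain ⟨t, htM, htM2⟩ := SetLike.not_le_iff_exists.mp hMsq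
  have ht0 : t ≠ 0 := fun h0 => htM2 (h0 ▸ (M ^ 2).zero_mem)
  have htnu : ¬ IsUnit t := (IsLocalRing.mem_maximalIdeal t).mp htM
  have hMt : M = Ideal.span {t} := by
    refine le_antisymm (fun u hu => ?_) ((Ideal.span_singleton_le_iff_mem M).mpr htM)
    rcases ValuationRing.dvd_total t u with hd | ⟨c, hc⟩
    · exact Ideal.mem_span_singleton.mpr hd
    · by_cases hcu : IsUnit c
      · obtain ⟨d, hd⟩ := hcu.exists_right_inv
        refine Ideal.mem_span_singleton.mpr ⟨d, ?_⟩
        calc u = u * (c * d) := by rw [hd, mul_one]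
        _ = t * d := by rw [← mul_assoc, ← hc]
      · exfalso
        apply htM2
        rw [pow_two, hc]
        exact Ideal.mul_mem_mul hu ((IsLocalRing.mem_maximalIdeal c).mpr hcu)
  -- the extension J of Q
  set J := Q.map f with hJdef
  have hJle : ∀ n : ℕ, 1 ≤ n → J ≤ Ideal.span {t ^ n} := by
    intro n hn
    have h1 : Q ≤ P ^ n := by
      rw [hQ]
      exact le_trans (iInf_le _ n) (iInf_le _ hn)
    calc J ≤ (P ^ n).map f := Ideal.map_mono h1
    _ = (P.map f) ^ n := Ideal.map_pow f P n
    _ = M ^ n := by rw [hmapP]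
    _ = Ideal.span {t ^ n} := by rw [hMt, Ideal.span_singleton_pow]
  have hJge : ∀ x : R, (∀ n : ℕ, x ∈ Ideal.span {t ^ n}) → x ∈ J := by
    intro x hx
    obtain ⟨⟨a, s⟩, rfl⟩ := IsLocalization.mk'_surjective P.primeCompl x
    have ha : ∀ n, a ∈ P ^ n := by
      intro n
      apply hpull
      have hspec : IsLocalization.mk' R a s * f s = f a := IsLocalization.mk'_spec R a s
      have hx' : IsLocalization.mk' R a s ∈ M ^ n := by
        rw [hMt, Ideal.span_singleton_pow]; exact hx n
      exact hspec ▸ Ideal.mul_mem_right _ _ hx'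
    have haQ : a ∈ Q := by
      rw [hQ]
      simp only [Ideal.mem_iInf]
      intro n _
      exact ha n
    show IsLocalization.mk' R a s ∈ J
    rw [IsLocalization.mk'_eq_mul_mk'_one]
    exact J.mul_mem_right _ (Ideal.mem_map_of_mem f haQ)
  have hJlt : ∀ x : R, x ∉ J → ∃ n, x ∉ Ideal.span {t ^ n} := by
    intro x hx
    by_contra hc
    push_neg at hc
    exact hx (hJge x hc)
  have htdvd : ∀ (x : R) (n : ℕ), x ∉ Ideal.span {t ^ n} → x ∣ t ^ n := by
    intro x n hx
    rcases ValuationRing.dvd_total x (t ^ n) with h | h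
    · exact h
    · exact absurd (Ideal.mem_span_singleton.mpr h) hx
  -- J is prime
  have hJprime : J.IsPrime := by
    constructor
    · intro htop
      have h1 : (1 : R) ∈ Ideal.span {t ^ 1} := hJle 1 le_rfl (htop ▸ Submodule.mem_top)
      rw [pow_one, Ideal.mem_span_singleton] at h1
      exact htnu (isUnit_of_dvd_one h1)
    · intro a b hab
      by_contra hcon
      push_neg at hcon
      obtain ⟨ha, hb⟩ := hcon
      obtain ⟨m, hm⟩ := hJlt a ha
      obtain ⟨k, hk⟩ := hJlt b hb
      have h1 : a * b ∣ t ^ (m + k) := by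
        rw [pow_add]; exact mul_dvd_mul (htdvd a m hm) (htdvd b k hk)
      have h2 : t ^ (m + k + 1) ∣ a * b :=
        Ideal.mem_span_singleton.mp (hJle _ (by omega) hab)
      obtain ⟨c, hc⟩ := h2.trans h1
      have h3 : (1 : R) = t * c := by
        apply mul_left_cancel₀ (pow_ne_zero (m + k) ht0)
        rw [mul_one]
        calc t ^ (m + k) = t ^ (m + k + 1) * c := hc
        _ = t ^ (m + k) * (t * c) := by ring
      exact htnu (IsUnit.of_mul_eq_one c h3.symm)
  haveI := hJprime
  haveI hdom : IsDomain (R ⧸ J) := Ideal.Quotient.isDomain J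
  refine ⟨hdom, ?_⟩
  apply IsDiscreteValuationRing.ofHasUnitMulPowIrreducibleFactorization
  set π := Ideal.Quotient.mk J with hπ
  have hMne : (1 : R) ∉ M :=
    fun h1 => (IsLocalRing.maximalIdeal.isMaximal R).ne_top ((Ideal.eq_top_iff_one M).mpr h1)
  have hJM : J ≤ M := by
    have := hJle 1 le_rfl
    rwa [pow_one, ← hMt] at this
  refine ⟨π t, ⟨?_, ?_⟩, ?_⟩
  · -- π t is not a unit
    intro hu
    obtain ⟨c, hc⟩ := hu.exists_right_inv
    obtain ⟨c', rfl⟩ := Ideal.Quotient.mk_surjective c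
    have hmem : t * c' - 1 ∈ J := by
      apply Ideal.Quotient.eq.mp
      rw [map_mul]
      rw [hc]
      exact (map_one π).symm
    apply hMne
    have htc : t * c' ∈ M := M.mul_mem_right _ htM
    have := M.sub_mem htc (hJM hmem)
    simpa using this
  · -- irreducibility
    intro a b hab
    by_contra hcon
    push_neg at hcon
    obtain ⟨ha, hb⟩ := hcon
    obtain ⟨x, rfl⟩ := Ideal.Quotient.mk_surjective a
    obtain ⟨y, rfl⟩ := Ideal.Quotient.mk_surjective b
    have hx : x ∈ M := (IsLocalRing.mem_maximalIdeal x).mpr fun hu => ha (hu.map π)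
    have hy : y ∈ M := (IsLocalRing.mem_maximalIdeal y).mpr fun hu => hb (hu.map π)
    have hsub : t - x * y ∈ J := by
      apply Ideal.Quotient.eq.mp
      rw [map_mul]
      exact hab
    have hxy : x * y ∈ Ideal.span {t ^ 2} := by
      have h2 : x * y ∈ M ^ 2 := by rw [pow_two]; exact Ideal.mul_mem_mul hx hy
      rwa [hMt, Ideal.span_singleton_pow] at h2
    have h2 : t ∈ Ideal.span {t ^ 2} := by
      have := (Ideal.span {t ^ 2}).add_mem (hJle 2 (by norm_num) hsub) hxy
      simpa using this
    obtain ⟨c, hc⟩ := Ideal.mem_span_singleton.mp h2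
    have h3 : (1 : R) = t * c := by
      apply mul_left_cancel₀ ht0
      rw [mul_one]
      calc t = t ^ 2 * c := hc
      _ = t * (t * c) := by ring
    exact htnu (IsUnit.of_mul_eq_one c h3.symm)
  · -- every nonzero element is associated to a power of π t
    intro x hx
    obtain ⟨a, rfl⟩ := Ideal.Quotient.mk_surjective x
    have haJ : a ∉ J := fun h => hx (Ideal.Quotient.eq_zero_iff_mem.mpr h)
    have hex : ∃ n, a ∉ Ideal.span {t ^ n} := hJlt a haJ
    classical
    set k := Nat.find hex with hkdef
    have hk : a ∉ Ideal.span {t ^ k} := Nat.find_spec hex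
    have hk1 : 1 ≤ k := by
      by_contra hc
      push_neg at hc
      interval_cases k
      exact hk (by simp)
    have hk' : a ∈ Ideal.span {t ^ (k - 1)} :=
      not_not.mp (Nat.find_min hex (by omega))
    obtain ⟨u, hu⟩ := Ideal.mem_span_singleton.mp hk'
    have huu : IsUnit u := by
      by_contra hnu
      have humem : u ∈ M := (IsLocalRing.mem_maximalIdeal u).mpr hnu
      rw [hMt, Ideal.mem_span_singleton] at humem
      obtain ⟨v, hv⟩ := humem
      apply hk
      rw [Ideal.mem_span_singleton]
      refine ⟨v, ?_⟩
      calc a = t ^ (k - 1) * (t * v) := by rw [hu, hv]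
      _ = t ^ (k - 1) * t * v := by ring
      _ = t ^ k * v := by rw [← pow_succ, Nat.sub_add_cancel hk1]
    have hassoc : Associated (t ^ (k - 1)) a := ⟨huu.unit, by rw [IsUnit.unit_spec, hu]⟩
    refine ⟨k - 1, ?_⟩
    rw [← map_pow]
    exact hassoc.map π
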